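/- arXiv:2603.27975 — 2 statements merged into one kernel-verified Lean document; each statement's English description precedes it below -/
import Mathlib

section
/- For integers n ≥ c ≥ 4 and 1 ≤ a < c/2, the graph H_{n,c,a} = K_a ∨ (K_{c-2a} ∪ (n-c+a)·K₁) has exactly C(c-a, 2) + (n-c+a)·a edges and, when a ≥ 2, contains no cycle of length ≥ c. -/
/-- `G` contains a cycle of length `ℓ`. -/
def hasCycleLength {V : Type*} (G : SimpleGraph V) (ℓ : ℕ) : Prop :=
  ∃ (u : V) (w : G.Walk u u), w.IsCycle ∧ w.length = ℓ


/-- Kopylov's graph `H_{n,c,a} = K_a ∨ (K_{c-2a} ∪ (n-c+a)·K₁)` on `Fin n`: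
vertices `< a` are joined to everything, vertices in `[a, c-a)` form a clique together
with them, the rest are only joined to the first `a` vertices. -/
def Hgraph (n c a : ℕ) : SimpleGraph (Fin n) where
  Adj u v := u ≠ v ∧ (u.val < a ∨ v.val < a ∨ (u.val < c - a ∧ v.val < c - a))
  symm := ⟨fun u v h => ⟨h.1.symm, by tauto⟩⟩
  loopless := ⟨fun u h => h.1 rfl⟩

instance (n c a : ℕ) : DecidableRel (Hgraph n c a).Adj :=
  fun u v => inferInstanceAs (Decidable (u ≠ v ∧ (u.val < a ∨ v.val < a ∨ (u.val < c - a ∧ v.val < c - a))))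

lemma Hgraph_adj {n c a : ℕ} {u v : Fin n} : (Hgraph n c a).Adj u v ↔
    u ≠ v ∧ (u.val < a ∨ v.val < a ∨ (u.val < c - a ∧ v.val < c - a)) := Iff.rfl

lemma card_filter_val_lt (n m : ℕ) (h : m ≤ n) :
    ((Finset.univ : Finset (Fin n)).filter fun x => x.val < m).card = m := by
  have : ((Finset.univ : Finset (Fin n)).filter fun x => x.val < m)
      = Finset.map (Fin.castLEEmb h) Finset.univ := by
    ext x
    simp only [Finset.mem_filter, Finset.mem_univ, true_and, Finset.mem_map, Fin.castLEEmb,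
      Function.Embedding.coeFn_mk]
    constructor
    · intro hx; exact ⟨⟨x.val, hx⟩, rfl⟩
    · rintro ⟨y, rfl⟩; exact y.2
  rw [this, Finset.card_map, Finset.card_univ, Fintype.card_fin]

lemma two_mul_choose_two (m : ℕ) : 2 * m.choose 2 = m * (m - 1) := by
  induction m with
  | zero => rfl
  | succ k ih =>
    rw [Nat.choose_succ_succ, Nat.mul_add, ih, Nat.choose_one_right, Nat.add_sub_cancel]
    cases k with
    | zero => rfl
    | succ j => rw [Nat.add_sub_cancel]; ring

lemma edge_count (n c a : ℕ) (h1 : 4 ≤ c) (h2 : c ≤ n) (h3 : 1 ≤ a) (h4 : 2 * a < c) :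
    (Hgraph n c a).edgeSet.ncard = (c - a).choose 2 + (n - c + a) * a := by
  set G := Hgraph n c a with hG
  have hcoe : G.edgeSet = ↑G.edgeFinset := (SimpleGraph.coe_edgeFinset G).symm
  rw [hcoe, Set.ncard_coe_finset]
  have hdeg : ∀ v : Fin n, G.degree v =
      (if v.val < a then n - 1 else if v.val < c - a then c - a - 1 else a) := by
    intro v
    rw [SimpleGraph.degree, SimpleGraph.neighborFinset_eq_filter]
    split_ifs with hv1 hv2
    · have : (Finset.univ.filter (G.Adj v)) = Finset.univ.erase v := by
        ext x
        simp only [Finset.mem_filter, Finset.mem_univ, true_and, Finset.mem_erase, hG,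
          Hgraph_adj, Fin.ext_iff, ne_eq, and_true, true_and]
        omega
      rw [this, Finset.card_erase_of_mem (Finset.mem_univ v), Finset.card_univ, Fintype.card_fin]
    · have : (Finset.univ.filter (G.Adj v)) =
          (Finset.univ.filter fun x : Fin n => x.val < c - a).erase v := by
        ext x
        simp only [Finset.mem_filter, Finset.mem_univ, true_and, Finset.mem_erase, hG,
          Hgraph_adj, Fin.ext_iff, ne_eq, and_true, true_and]
        omega
      rw [this, Finset.card_erase_of_mem (by simp [hv2]), card_filter_val_lt n (c - a) (by omega)]
    · have : (Finset.univ.filter (G.Adj v)) =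
          (Finset.univ.filter fun x : Fin n => x.val < a) := by
        ext x
        simp only [Finset.mem_filter, Finset.mem_univ, true_and, hG,
          Hgraph_adj, Fin.ext_iff, ne_eq, and_true, true_and]
        omega
      rw [this, card_filter_val_lt n a (by omega)]
  have hsum : ∑ v : Fin n, G.degree v =
      a * (n - 1) + (c - a - a) * (c - a - 1) + (n - (c - a)) * a := by
    calc ∑ v : Fin n, G.degree v
        = ∑ i ∈ Finset.range n,
            (if i < a then n - 1 else if i < c - a then c - a - 1 else a) := by
          rw [← Fin.sum_univ_eq_sum_range]
          exact Finset.sum_congr rfl fun v _ => hdeg v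
      _ = _ := by
          rw [Finset.range_eq_Ico, ← Finset.sum_Ico_consecutive _ (Nat.zero_le (c - a)) (by omega : c - a ≤ n),
            ← Finset.sum_Ico_consecutive _ (Nat.zero_le a) (by omega : a ≤ c - a)]
          have e1 : ∑ i ∈ Finset.Ico 0 a,
              (if i < a then n - 1 else if i < c - a then c - a - 1 else a) = a * (n - 1) := by
            rw [Finset.sum_congr rfl (fun i hi => by
              simp only [Finset.mem_Ico] at hi
              rw [if_pos hi.2]), Finset.sum_const, Nat.card_Ico, smul_eq_mul, Nat.sub_zero]
          have e2 : ∑ i ∈ Finset.Ico a (c - a),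
              (if i < a then n - 1 else if i < c - a then c - a - 1 else a)
              = (c - a - a) * (c - a - 1) := by
            rw [Finset.sum_congr rfl (fun i hi => by
              simp only [Finset.mem_Ico] at hi
              rw [if_neg (by omega), if_pos hi.2]), Finset.sum_const, Nat.card_Ico, smul_eq_mul]
          have e3 : ∑ i ∈ Finset.Ico (c - a) n,
              (if i < a then n - 1 else if i < c - a then c - a - 1 else a)
              = (n - (c - a)) * a := by
            rw [Finset.sum_congr rfl (fun i hi => by
              simp only [Finset.mem_Ico] at hi
              rw [if_neg (by omega), if_neg (by omega)]), Finset.sum_const, Nat.card_Ico, smul_eq_mul]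
          rw [e1, e2, e3]
  have htwice := SimpleGraph.sum_degrees_eq_twice_card_edges G
  rw [hsum] at htwice
  have hgoal2 : 2 * ((c - a).choose 2 + (n - c + a) * a) =
      a * (n - 1) + (c - a - a) * (c - a - 1) + (n - (c - a)) * a := by
    rw [Nat.mul_add, two_mul_choose_two]
    obtain ⟨s, rfl⟩ : ∃ s, c = 2 * a + 1 + s := ⟨c - (2 * a + 1), by omega⟩
    obtain ⟨t, rfl⟩ : ∃ t, n = (2 * a + 1 + s) + t := ⟨n - (2 * a + 1 + s), by omega⟩
    have e1 : 2 * a + 1 + s - a = a + 1 + s := by omega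
    have e2 : a + 1 + s - 1 = a + s := by omega
    have e3 : 2 * a + 1 + s + t - (2 * a + 1 + s) + a = t + a := by omega
    have e4 : a + 1 + s - a = 1 + s := by omega
    have e5 : 2 * a + 1 + s + t - 1 = 2 * a + s + t := by omega
    have e6 : 2 * a + 1 + s + t - (a + 1 + s) = a + t := by omega
    rw [e1, e2, e3, e4, e5, e6]
    ring
  omega

lemma no_long_cycle (n c a : ℕ) (h1 : 4 ≤ c) (h2 : c ≤ n) (ha : 2 ≤ a) (h4 : 2 * a < c)
    (ℓ : ℕ) (hℓ : c ≤ ℓ) (u : Fin n) (w : (Hgraph n c a).Walk u u)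
    (hc : w.IsCycle) (hlen : w.length = ℓ) : False := by
  classical
  set L : List (Fin n) := w.support.tail with hLdef
  have hslen : w.support.length = ℓ + 1 := by rw [w.length_support, hlen]
  have hLlen : L.length = ℓ := by rw [hLdef, List.length_tail, hslen]; omega
  have hnodup : L.Nodup := hc.support_nodup
  have hlpos : 0 < ℓ := by omega
  set vv : ℕ → Fin n := fun i => L.getD i u with hvv
  have hinj : ∀ i < ℓ, ∀ j < ℓ, vv i = vv j → i = j := by
    intro i hi j hj hij
    have hi' : i < L.length := by omega
    have hj' : j < L.length := by omega
    rw [hvv] at hij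
    simp only [List.getD_eq_getElem _ _ hi', List.getD_eq_getElem _ _ hj'] at hij
    exact (List.Nodup.getElem_inj_iff hnodup).mp hij
  have hsup : w.support = u :: L := w.support_eq_cons
  have hget := List.isChain_iff_getElem.mp w.isChain_adj_support
  have hA : ∀ i, i + 1 < ℓ → (Hgraph n c a).Adj (vv i) (vv (i + 1)) := by
    intro i hi
    have h2' : i < L.length := by omega
    have h1' : i + 1 < L.length := by omega
    have hh := hget (i + 1) (by rw [hslen]; omega)
    simp only [hsup, List.getElem_cons_succ] at hh
    rw [hvv]
    simpa only [List.getD_eq_getElem _ _ h2', List.getD_eq_getElem _ _ h1'] using hh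
  have hLne : L ≠ [] := by
    intro h; rw [h] at hLlen; simp at hLlen; omega
  have hu : vv (ℓ - 1) = u := by
    have h1' : ℓ - 1 < L.length := by omega
    have hl := w.getLast_support
    rw [List.getLast_eq_getElem] at hl
    simp only [show w.support.length - 1 = (ℓ - 1) + 1 from by omega] at hl
    simp only [hsup, List.getElem_cons_succ] at hl
    rw [hvv]
    simpa only [List.getD_eq_getElem _ _ h1'] using hl
  have hB : (Hgraph n c a).Adj (vv (ℓ - 1)) (vv 0) := by
    rw [hu]
    have h0' : (0 : ℕ) < L.length := by omega
    have hh := hget 0 (by rw [hslen]; omega)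
    simp only [hsup, List.getElem_cons_succ, List.getElem_cons_zero] at hh
    rw [hvv]
    simpa only [List.getD_eq_getElem _ _ h0'] using hh
  have hadj : ∀ i < ℓ, (Hgraph n c a).Adj (vv i) (vv ((i + 1) % ℓ)) := by
    intro i hi
    rcases eq_or_lt_of_le (Nat.succ_le_of_lt hi) with h | h
    · have e0 : (i + 1) % ℓ = 0 := by
        rw [show i + 1 = ℓ from by omega]; exact Nat.mod_self ℓ
      rw [e0, show i = ℓ - 1 from by omega]
      exact hB
    · rw [Nat.mod_eq_of_lt h]; exact hA i h
  set SS := (Finset.range ℓ).filter (fun i => (vv i).val < a) with hSS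
  set MM := (Finset.range ℓ).filter (fun i => ¬ (vv i).val < a ∧ (vv i).val < c - a) with hMM
  set II := (Finset.range ℓ).filter (fun i => ¬ (vv i).val < c - a) with hII
  have hmemS : ∀ i, i ∈ SS ↔ (i < ℓ ∧ (vv i).val < a) := by
    intro i; rw [hSS]; simp [Finset.mem_filter]
  have hmemM : ∀ i, i ∈ MM ↔ (i < ℓ ∧ ¬ (vv i).val < a ∧ (vv i).val < c - a) := by
    intro i; rw [hMM]; simp [Finset.mem_filter]
  have hmemI : ∀ i, i ∈ II ↔ (i < ℓ ∧ ¬ (vv i).val < c - a) := by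
    intro i; rw [hII]; simp [Finset.mem_filter]
  have hpart : SS.card + MM.card + II.card = ℓ := by
    have k1 := Finset.card_filter_add_card_filter_not
      (s := Finset.range ℓ) (p := fun i => (vv i).val < a)
    have k2 := Finset.card_filter_add_card_filter_not
      (s := (Finset.range ℓ).filter fun i => ¬ (vv i).val < a)
      (p := fun i => (vv i).val < c - a)
    rw [Finset.filter_filter, Finset.filter_filter] at k2
    rw [Finset.card_range] at k1
    rw [← hSS] at k1
    rw [← hMM] at k2
    have e2 : ((Finset.range ℓ).filter fun i => (¬ (vv i).val < a) ∧ ¬ (vv i).val < c - a)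
        = II := by
      ext i
      rw [hmemI i]
      simp only [Finset.mem_filter, Finset.mem_range]
      constructor
      · rintro ⟨hi, _, hv⟩; exact ⟨hi, hv⟩
      · rintro ⟨hi, hv⟩; exact ⟨hi, by omega, hv⟩
    rw [e2] at k2
    omega
  have hScard : SS.card ≤ a := by
    have hh : SS.card ≤ (Finset.range a).card :=
      Finset.card_le_card_of_injOn (fun i => (vv i).val)
        (fun i hi => by
          rw [Finset.mem_coe, hmemS i] at hi
          exact Finset.mem_coe.mpr (Finset.mem_range.mpr hi.2))
        (fun i hi j hj e => by
          rw [Finset.mem_coe, hmemS i] at hi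
          rw [Finset.mem_coe, hmemS j] at hj
          exact hinj i hi.1 j hj.1 (Fin.val_injective e))
    simpa using hh
  have hMcard : MM.card ≤ c - a - a := by
    have hh : MM.card ≤ (Finset.Ico a (c - a)).card :=
      Finset.card_le_card_of_injOn (fun i => (vv i).val)
        (fun i hi => by
          rw [Finset.mem_coe, hmemM i] at hi
          show (vv i).val ∈ (Finset.Ico a (c - a) : Set ℕ)
          rw [Finset.mem_coe]
          rw [Finset.mem_Ico]
          omega)
        (fun i hi j hj e => by
          rw [Finset.mem_coe, hmemM i] at hi
          rw [Finset.mem_coe, hmemM j] at hj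
          exact hinj i hi.1 j hj.1 (Fin.val_injective e))
    simpa [Nat.card_Ico] using hh
  have hgmem : ∀ i, i < ℓ → (i + 1) % ℓ < ℓ := fun i _ => Nat.mod_lt _ hlpos
  have hginj : ∀ i < ℓ, ∀ j < ℓ, (i + 1) % ℓ = (j + 1) % ℓ → i = j := by
    intro i hi j hj e
    have e1 : (i + 1) % ℓ = if i + 1 = ℓ then 0 else i + 1 := by
      split_ifs with h
      · rw [h]; exact Nat.mod_self ℓ
      · exact Nat.mod_eq_of_lt (by omega)
    have e2 : (j + 1) % ℓ = if j + 1 = ℓ then 0 else j + 1 := by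
      split_ifs with h
      · rw [h]; exact Nat.mod_self ℓ
      · exact Nat.mod_eq_of_lt (by omega)
    rw [e1, e2] at e
    split_ifs at e <;> omega
  have hgS : ∀ i ∈ II, (i + 1) % ℓ ∈ SS := by
    intro i hi
    rw [hmemI i] at hi
    have hadj' := hadj i hi.1
    rw [Hgraph_adj] at hadj'
    have hva : ¬ (vv i).val < a := by omega
    rw [hmemS]
    refine ⟨hgmem i hi.1, ?_⟩
    rcases hadj'.2 with h | h | h
    · omega
    · exact h
    · omega
  have hIS : II.card ≤ SS.card :=
    Finset.card_le_card_of_injOn (fun i => (i + 1) % ℓ) hgS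
      (fun i hi j hj e => by
        rw [Finset.mem_coe, hmemI i] at hi
        rw [Finset.mem_coe, hmemI j] at hj
        exact hginj i hi.1 j hj.1 e)
  have hstrict : MM.Nonempty → II.Nonempty → II.card + 1 ≤ SS.card := by
    rintro ⟨m, hm⟩ ⟨i0, hi0⟩
    have hex : ∃ j ∈ SS, ∀ i ∈ II, (i + 1) % ℓ ≠ j := by
      by_contra hno
      push_neg at hno
      have hm' := (hmemM m).mp hm
      have claim : ∀ t, (m + t) % ℓ ∈ MM := by
        intro t
        induction t with
        | zero =>
          have : (m + 0) % ℓ = m := by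
            rw [Nat.add_zero]; exact Nat.mod_eq_of_lt hm'.1
          rw [this]; exact hm
        | succ t ih =>
          have hp := (hmemM _).mp ih
          have hplt : (m + t) % ℓ < ℓ := Nat.mod_lt _ hlpos
          have hadj' := hadj _ hplt
          rw [Hgraph_adj] at hadj'
          have hstep : (m + (t + 1)) % ℓ = ((m + t) % ℓ + 1) % ℓ := by
            conv_lhs => rw [show m + (t + 1) = (m + t) + 1 from by ring,
              Nat.add_mod (m + t) 1 ℓ]
            rw [Nat.mod_eq_of_lt (show 1 < ℓ from by omega)]
          rw [hstep]
          set q := ((m + t) % ℓ + 1) % ℓ with hq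
          have hqlt : q < ℓ := hgmem _ hplt
          by_cases hq1 : (vv q).val < a
          · exfalso
            have hqS : q ∈ SS := (hmemS q).mpr ⟨hqlt, hq1⟩
            obtain ⟨i, hiII, hgi⟩ := hno q hqS
            have hiI := (hmemI i).mp hiII
            have hieq : i = (m + t) % ℓ := hginj i hiI.1 _ hplt hgi
            rw [hieq] at hiI
            omega
          · by_cases hq2 : (vv q).val < c - a
            · exact (hmemM q).mpr ⟨hqlt, hq1, hq2⟩
            · exfalso
              rcases hadj'.2 with h | h | h <;> omega
      have hi0' := (hmemI i0).mp hi0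
      have hkey := claim (i0 + ℓ - m)
      have heq : (m + (i0 + ℓ - m)) % ℓ = i0 := by
        rw [show m + (i0 + ℓ - m) = i0 + ℓ from by omega, Nat.add_mod_right]
        exact Nat.mod_eq_of_lt hi0'.1
      rw [heq] at hkey
      have := (hmemM i0).mp hkey
      omega
    obtain ⟨j, hjS, hj⟩ := hex
    have h5 : II.card ≤ (SS.erase j).card :=
      Finset.card_le_card_of_injOn (fun i => (i + 1) % ℓ)
        (fun i hi => Finset.mem_erase.mpr ⟨hj i hi, hgS i hi⟩)
        (fun i hi j' hj' e => by
          rw [Finset.mem_coe, hmemI i] at hi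
          rw [Finset.mem_coe, hmemI j'] at hj'
          exact hginj i hi.1 j' hj'.1 e)
    have h6 := Finset.card_erase_of_mem hjS
    have h7 : 1 ≤ SS.card := Finset.card_pos.mpr ⟨j, hjS⟩
    omega
  rcases Finset.eq_empty_or_nonempty MM with hM | hM
  · rw [hM, Finset.card_empty] at hpart
    omega
  rcases Finset.eq_empty_or_nonempty II with hI | hI
  · rw [hI, Finset.card_empty] at hpart
    omega
  have := hstrict hM hI
  omega

/-- For `n ≥ c ≥ 4` and `1 ≤ a < c/2`, the graph `H_{n,c,a}` has exactly
`C(c-a,2) + (n-c+a)·a` edges and, when `a ≥ 2`, no cycle of length `≥ c`. -/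
theorem stmt9 (n c a : ℕ) (h1 : 4 ≤ c) (h2 : c ≤ n) (h3 : 1 ≤ a) (h4 : 2 * a < c) :
    (Hgraph n c a).edgeSet.ncard = (c - a).choose 2 + (n - c + a) * a ∧
    (2 ≤ a → ∀ ℓ : ℕ, c ≤ ℓ → ¬ hasCycleLength (Hgraph n c a) ℓ) := by
  refine ⟨edge_count n c a h1 h2 h3 h4, ?_⟩
  rintro ha ℓ hℓ ⟨u, w, hc, hlen⟩
  exact no_long_cycle n c a h1 h2 ha h4 ℓ (le_trans hℓ (le_refl _)) u w hc hlen
end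

section
/- Let k ≥ 2 and k+2 ≤ n ≤ 2k+1. The graph K₁ ∨ (K_k ∪ K_{n-k-1}) has exactly C(k+1,2) + C(n-k,2) edges and contains no cycle of length k+2 or longer; in particular it does not contain k admissible cycles. -/
/-- `G` contains `k` admissible cycles: cycles whose lengths form an arithmetic
progression of length `k` with common difference 1 or 2. -/
def hasKAdmissibleCycles {V : Type*} (G : SimpleGraph V) (k : ℕ) : Prop :=
  ∃ ℓ d : ℕ, (d = 1 ∨ d = 2) ∧ ∀ i < k, hasCycleLength G (ℓ + i * d)


/-- The graph `K₁ ∨ (K_k ∪ K_{n-k-1})` on `Fin n`: vertex `0` is joined to everything,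
vertices `1,…,k` form a clique, vertices `k+1,…,n-1` form a clique. -/
def jointCliques (n k : ℕ) : SimpleGraph (Fin n) where
  Adj u v := u ≠ v ∧ (u.val = 0 ∨ v.val = 0 ∨ (u.val ≤ k ∧ v.val ≤ k) ∨ (k < u.val ∧ k < v.val))
  symm := ⟨fun u v h => ⟨h.1.symm, by tauto⟩⟩
  loopless := ⟨fun u h => h.1 rfl⟩

private lemma jc_adj {n k : ℕ} {u v : Fin n} :
    (jointCliques n k).Adj u v ↔
      u ≠ v ∧ (u.val = 0 ∨ v.val = 0 ∨ (u.val ≤ k ∧ v.val ≤ k) ∨ (k < u.val ∧ k < v.val)) :=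
  Iff.rfl

instance jcDecAdj (n k : ℕ) : DecidableRel (jointCliques n k).Adj := fun u v =>
  decidable_of_iff' _ (jc_adj (n := n) (k := k) (u := u) (v := v))

private lemma card_filter_val (n : ℕ) (p : ℕ → Prop) [DecidablePred p] :
    (Finset.univ.filter (fun x : Fin n => p x.val)).card = ((Finset.range n).filter p).card := by
  apply Finset.card_bij (fun x _ => x.val)
  · intro a ha
    simp only [Finset.mem_filter, Finset.mem_univ, true_and] at ha
    simp [a.isLt, ha]
  · intro a _ b _ h
    exact Fin.ext h
  · intro b hb
    simp only [Finset.mem_filter, Finset.mem_range] at hb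
    exact ⟨⟨b, hb.1⟩, by simp [hb.2], rfl⟩

private lemma degree_jc (n k : ℕ) (hk : 2 ≤ k) (h1 : k + 2 ≤ n) (v : Fin n) :
    (jointCliques n k).degree v =
      if v.val = 0 then n - 1 else if v.val ≤ k then k else n - (k + 1) := by
  classical
  have hdeg : (jointCliques n k).degree v
      = (Finset.univ.filter (fun u : Fin n =>
          v.val ≠ u.val ∧ (v.val = 0 ∨ u.val = 0 ∨ (v.val ≤ k ∧ u.val ≤ k)
            ∨ (k < v.val ∧ k < u.val)))).card := by
    rw [← SimpleGraph.card_neighborFinset_eq_degree, SimpleGraph.neighborFinset_eq_filter]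
    congr 1
    apply Finset.filter_congr
    intro u _
    rw [jc_adj]
    simp [Ne, Fin.ext_iff]
  rw [hdeg, card_filter_val n (fun i =>
    v.val ≠ i ∧ (v.val = 0 ∨ i = 0 ∨ (v.val ≤ k ∧ i ≤ k) ∨ (k < v.val ∧ k < i)))]
  by_cases hv0 : v.val = 0
  · have heq : ((Finset.range n).filter (fun i =>
        v.val ≠ i ∧ (v.val = 0 ∨ i = 0 ∨ (v.val ≤ k ∧ i ≤ k) ∨ (k < v.val ∧ k < i))))
        = Finset.Ico 1 n := by
      ext a
      simp only [Finset.mem_filter, Finset.mem_range, Finset.mem_Ico]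
      omega
    rw [heq, Nat.card_Ico, if_pos hv0]
  · by_cases hvk : v.val ≤ k
    · have heq : ((Finset.range n).filter (fun i =>
          v.val ≠ i ∧ (v.val = 0 ∨ i = 0 ∨ (v.val ≤ k ∧ i ≤ k) ∨ (k < v.val ∧ k < i))))
          = (Finset.range (k + 1)).erase v.val := by
        ext a
        simp only [Finset.mem_filter, Finset.mem_range, Finset.mem_erase]
        omega
      rw [heq, Finset.card_erase_of_mem (by simp only [Finset.mem_range]; omega),
        Finset.card_range, if_neg hv0, if_pos hvk]
      omega
    · have heq : ((Finset.range n).filter (fun i =>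
          v.val ≠ i ∧ (v.val = 0 ∨ i = 0 ∨ (v.val ≤ k ∧ i ≤ k) ∨ (k < v.val ∧ k < i))))
          = (insert 0 (Finset.Ico (k + 1) n)).erase v.val := by
        ext a
        simp only [Finset.mem_filter, Finset.mem_range, Finset.mem_erase, Finset.mem_insert,
          Finset.mem_Ico]
        omega
      rw [heq, Finset.card_erase_of_mem (by
          simp only [Finset.mem_insert, Finset.mem_Ico]
          right; exact ⟨by omega, v.isLt⟩),
        Finset.card_insert_of_notMem (by simp), Nat.card_Ico, if_neg hv0, if_neg hvk]
      omega

private lemma nodup_length_le {α : Type*} [DecidableEq α] {l : List α} (h : l.Nodup)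
    {S : Finset α} (hsub : ∀ x ∈ l, x ∈ S) : l.length ≤ S.card := by
  rw [← List.toFinset_card_of_nodup h]
  exact Finset.card_le_card (fun x hx => hsub x (List.mem_toFinset.mp hx))

private lemma walk_side_avoid {n k : ℕ} {x y : Fin n} (q : (jointCliques n k).Walk x y)
    (h0 : ∀ c ∈ q.support, c.val ≠ 0) :
    ∀ a ∈ q.support, (a.val ≤ k ↔ x.val ≤ k) := by
  induction q with
  | nil =>
    intro a ha
    simp only [SimpleGraph.Walk.support_nil, List.mem_singleton] at ha
    subst ha; rfl
  | @cons u v y h q ih =>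
    intro a ha
    simp only [SimpleGraph.Walk.support_cons, List.mem_cons] at ha
    have hu0 : u.val ≠ 0 := h0 u (by simp [SimpleGraph.Walk.support_cons])
    have hv0 : v.val ≠ 0 := h0 v (by
      simp only [SimpleGraph.Walk.support_cons, List.mem_cons]
      exact Or.inr q.start_mem_support)
    obtain ⟨-, h'⟩ := jc_adj.mp h
    have huv : u.val ≤ k ↔ v.val ≤ k := by omega
    rcases ha with rfl | ha
    · rfl
    · exact (ih (fun c hc => h0 c (by simp [SimpleGraph.Walk.support_cons, hc])) a ha).trans
        huv.symm

private lemma walk_side_to_zero {n k : ℕ} :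
    ∀ {x y : Fin n} (q : (jointCliques n k).Walk x y), y.val = 0 → q.support.Nodup →
      ∀ a ∈ q.support, a.val ≠ 0 → (a.val ≤ k ↔ x.val ≤ k) := by
  intro x y q
  induction q with
  | nil =>
    intro hy _ a ha ha0
    simp only [SimpleGraph.Walk.support_nil, List.mem_singleton] at ha
    exact absurd (ha ▸ hy) ha0
  | @cons u v y h q ih =>
    intro hy hnd a ha ha0
    simp only [SimpleGraph.Walk.support_cons, List.mem_cons] at ha
    simp only [SimpleGraph.Walk.support_cons, List.nodup_cons] at hnd
    obtain ⟨hu_nin, hq_nd⟩ := hnd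
    rcases ha with rfl | ha
    · rfl
    · have ihv := ih hy hq_nd a ha ha0
      have hy_mem : y ∈ q.support := q.end_mem_support
      have hu0 : u.val ≠ 0 := by
        intro h0
        have huy : u = y := Fin.ext (by rw [h0, hy])
        exact hu_nin (huy ▸ hy_mem)
      by_cases hv0 : v.val = 0
      · exfalso
        have hvy : v = y := Fin.ext (by rw [hv0, hy])
        subst hvy
        cases q with
        | nil =>
          simp only [SimpleGraph.Walk.support_nil, List.mem_singleton] at ha
          exact ha0 (ha ▸ hv0)
        | cons h' q' =>
          simp only [SimpleGraph.Walk.support_cons, List.nodup_cons] at hq_nd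
          exact hq_nd.1 q'.end_mem_support
      · obtain ⟨-, h'⟩ := jc_adj.mp h
        have huv : u.val ≤ k ↔ v.val ≤ k := by omega
        exact ihv.trans huv.symm

private lemma mem_support_iff_tail {V : Type*} {G : SimpleGraph V} {v : V} (c : G.Walk v v)
    (hc : ¬ c.Nil) (x : V) : x ∈ c.support ↔ x ∈ c.support.tail := by
  constructor
  · intro hx
    rw [SimpleGraph.Walk.support_eq_cons c] at hx
    rcases List.mem_cons.mp hx with rfl | h
    · obtain ⟨u', h', q, rfl⟩ := SimpleGraph.Walk.not_nil_iff.mp hc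
      simp [SimpleGraph.Walk.support_cons, q.end_mem_support]
    · exact h
  · intro hx
    rw [SimpleGraph.Walk.support_eq_cons c]
    exact List.mem_cons_of_mem _ hx

private lemma cycle_side {n k : ℕ} (hn : 0 < n) {u : Fin n}
    {w : (jointCliques n k).Walk u u} (hw : w.IsCycle) :
    (∀ a ∈ w.support, a.val ≤ k) ∨ (∀ a ∈ w.support, a.val = 0 ∨ k < a.val) := by
  by_contra hcon
  push_neg at hcon
  obtain ⟨⟨a, ha, hak⟩, ⟨b, hb, hbk⟩⟩ := hcon
  set z : Fin n := ⟨0, hn⟩ with hzdef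
  have hz0 : z.val = 0 := rfl
  have ha0 : a.val ≠ 0 := by omega
  have hb0 : b.val ≠ 0 := hbk.1
  have ha_z : a ≠ z := fun h' => ha0 (by rw [h'])
  have hb_z : b ≠ z := fun h' => hb0 (by rw [h'])
  have hwnil : ¬ w.Nil := by
    have := hw.three_le_length
    rw [SimpleGraph.Walk.not_nil_iff_lt_length]
    omega
  by_cases hz : z ∈ w.support
  · have hc₂ := hw.rotate hz
    have hperm := SimpleGraph.Walk.support_rotate w z hz
    have hnil₂ : ¬ (w.rotate z hz).Nil := by
      have := hc₂.three_le_length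
      rw [SimpleGraph.Walk.not_nil_iff_lt_length]
      omega
    have ha₂ : a ∈ (w.rotate z hz).support := by
      rw [mem_support_iff_tail _ hnil₂, hperm.mem_iff, ← mem_support_iff_tail _ hwnil]
      exact ha
    have hb₂ : b ∈ (w.rotate z hz).support := by
      rw [mem_support_iff_tail _ hnil₂, hperm.mem_iff, ← mem_support_iff_tail _ hwnil]
      exact hb
    obtain ⟨c, hzc, q, hq⟩ := SimpleGraph.Walk.not_nil_iff.mp hnil₂
    have hqnd : q.support.Nodup := by
      have hnd := hc₂.support_nodup
      rw [hq, SimpleGraph.Walk.support_cons] at hnd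
      exact hnd
    have haq : a ∈ q.support := by
      rw [hq, SimpleGraph.Walk.support_cons, List.mem_cons] at ha₂
      exact ha₂.resolve_left ha_z
    have hbq : b ∈ q.support := by
      rw [hq, SimpleGraph.Walk.support_cons, List.mem_cons] at hb₂
      exact hb₂.resolve_left hb_z
    have haiff := walk_side_to_zero q hz0 hqnd a haq ha0
    have hbiff := walk_side_to_zero q hz0 hqnd b hbq hb0
    have hck : c.val ≤ k := hbiff.mp (by omega)
    exact absurd (haiff.mpr hck) (by omega)
  · have h0 : ∀ c ∈ w.support, c.val ≠ 0 := by
      intro c hc hc0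
      exact hz (by rwa [show z = c from (Fin.ext hc0.symm)])
    have haiff := walk_side_avoid w h0 a ha
    have hbiff := walk_side_avoid w h0 b hb
    have hck : u.val ≤ k := hbiff.mp (by omega)
    exact absurd (haiff.mpr hck) (by omega)

/-- For `k ≥ 2` and `k + 2 ≤ n ≤ 2k + 1`, the graph `K₁ ∨ (K_k ∪ K_{n-k-1})` has
exactly `C(k+1,2) + C(n-k,2)` edges, contains no cycle of length `≥ k + 2`, and in
particular contains no `k` admissible cycles. -/
theorem stmt11 (k n : ℕ) (hk : 2 ≤ k) (h1 : k + 2 ≤ n) (h2 : n ≤ 2 * k + 1) :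
    (jointCliques n k).edgeSet.ncard = (k + 1).choose 2 + (n - k).choose 2 ∧
    (∀ ℓ : ℕ, k + 2 ≤ ℓ → ¬ hasCycleLength (jointCliques n k) ℓ) ∧
    ¬ hasKAdmissibleCycles (jointCliques n k) k := by
  classical
  obtain ⟨j, rfl⟩ : ∃ j, n = k + 2 + j := ⟨n - (k + 2), by omega⟩
  set n := k + 2 + j with hn
  have hnocycle : ∀ ℓ : ℕ, k + 2 ≤ ℓ → ¬ hasCycleLength (jointCliques n k) ℓ := by
    rintro ℓ hℓ ⟨u, w, hc, hlen⟩
    have hnd : w.support.tail.Nodup := hc.support_nodup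
    have hlt : w.support.tail.length = ℓ := by
      have h := w.length_support
      rw [List.length_tail]
      omega
    have htail_sub : ∀ x ∈ w.support.tail, x ∈ w.support := fun x hx =>
      List.mem_of_mem_tail hx
    rcases cycle_side (by omega) hc with hside | hside
    · have hcard : (Finset.univ.filter (fun x : Fin n => x.val ≤ k)).card = k + 1 := by
        rw [card_filter_val n (fun i => i ≤ k)]
        have heq : (Finset.range n).filter (fun i => i ≤ k) = Finset.range (k + 1) := by
          ext a
          simp only [Finset.mem_filter, Finset.mem_range]
          omega
        rw [heq, Finset.card_range]
      have hle := nodup_length_le hnd (S := Finset.univ.filter (fun x : Fin n => x.val ≤ k))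
        (fun x hx => Finset.mem_filter.mpr ⟨Finset.mem_univ x, hside x (htail_sub x hx)⟩)
      omega
    · have hcard : (Finset.univ.filter
          (fun x : Fin n => x.val = 0 ∨ k < x.val)).card = n - k := by
        rw [card_filter_val n (fun i => i = 0 ∨ k < i)]
        have heq : (Finset.range n).filter (fun i => i = 0 ∨ k < i)
            = insert 0 (Finset.Ico (k + 1) n) := by
          ext a
          simp only [Finset.mem_filter, Finset.mem_range, Finset.mem_insert, Finset.mem_Ico]
          omega
        rw [heq, Finset.card_insert_of_notMem (by simp), Nat.card_Ico]
        omega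
      have hle := nodup_length_le hnd
        (S := Finset.univ.filter (fun x : Fin n => x.val = 0 ∨ k < x.val))
        (fun x hx => Finset.mem_filter.mpr ⟨Finset.mem_univ x, hside x (htail_sub x hx)⟩)
      omega
  refine ⟨?_, hnocycle, ?_⟩
  · have hsum := (jointCliques n k).sum_degrees_eq_twice_card_edges
    have hdeg : ∀ v : Fin n, (jointCliques n k).degree v =
        if v.val = 0 then n - 1 else if v.val ≤ k then k else n - (k + 1) :=
      degree_jc n k hk (by omega)
    rw [Finset.sum_congr rfl (fun v _ => hdeg v)] at hsum
    rw [Fin.sum_univ_eq_sum_range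
      (fun i => if i = 0 then n - 1 else if i ≤ k then k else n - (k + 1))] at hsum
    have hsplit : ∑ i ∈ Finset.range n,
        (if i = 0 then n - 1 else if i ≤ k then k else n - (k + 1))
        = (n - 1) + k * k + (n - (k + 1)) * (n - (k + 1)) := by
      rw [Finset.range_eq_Ico,
        ← Finset.sum_Ico_consecutive _ (Nat.zero_le (k + 1)) (by omega : k + 1 ≤ n)]
      have h2' : ∑ i ∈ Finset.Ico (k + 1) n,
          (if i = 0 then n - 1 else if i ≤ k then k else n - (k + 1))
          = (n - (k + 1)) * (n - (k + 1)) := by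
        rw [Finset.sum_const_nat (m := n - (k + 1)) (fun i hi => by
          rw [Finset.mem_Ico] at hi
          rw [if_neg (by omega), if_neg (by omega)]), Nat.card_Ico]
      have h1' : ∑ i ∈ Finset.Ico 0 (k + 1),
          (if i = 0 then n - 1 else if i ≤ k then k else n - (k + 1))
          = (n - 1) + k * k := by
        rw [← Finset.range_eq_Ico, Finset.sum_range_succ']
        have hinner : ∑ i ∈ Finset.range k,
            (if i + 1 = 0 then n - 1 else if i + 1 ≤ k then k else n - (k + 1)) = k * k := by
          rw [Finset.sum_const_nat (m := k) (fun i hi => by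
            rw [Finset.mem_range] at hi
            rw [if_neg (by omega), if_pos (by omega)]), Finset.card_range]
        rw [hinner, if_pos rfl]
        omega
      rw [h1', h2']
    rw [hsplit] at hsum
    rw [← SimpleGraph.coe_edgeFinset, Set.ncard_coe_finset]
    have hc1 : 2 * ((k + 1).choose 2) = (k + 1) * k := by
      rw [Nat.choose_two_right, Nat.succ_sub_one]
      have hev : Even ((k + 1) * k) := by
        rw [mul_comm]; exact Nat.even_mul_succ_self k
      rw [Nat.mul_div_cancel' hev.two_dvd]
    have hc2 : 2 * ((n - k).choose 2) = (j + 2) * (j + 1) := by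
      rw [show n - k = j + 2 from by omega, Nat.choose_two_right, Nat.succ_sub_one]
      have hev : Even ((j + 2) * (j + 1)) := by
        rw [mul_comm]; exact Nat.even_mul_succ_self (j + 1)
      rw [Nat.mul_div_cancel' hev.two_dvd]
    have h2e : 2 * ((k + 1).choose 2 + (n - k).choose 2)
        = 2 * (jointCliques n k).edgeFinset.card := by
      rw [Nat.mul_add, hc1, hc2, ← hsum,
        show n - 1 = k + 1 + j from by omega,
        show n - (k + 1) = j + 1 from by omega]
      ring
    omega
  · rintro ⟨ℓ', d, hd, hall⟩
    obtain ⟨u0, w0, hc0, hl0⟩ := hall 0 (by omega)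
    have h3 : 3 ≤ ℓ' := by
      have := hc0.three_le_length
      omega
    exact hnocycle (ℓ' + (k - 1) * d) (by rcases hd with rfl | rfl <;> omega)
      (hall (k - 1) (by omega))
end
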